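/- arXiv:1709.06821 — 2 statements merged into one kernel-verified Lean document; each statement's English description precedes it below -/
import Mathlib

section
/- For a fixed elimination ordering P on a graph G, if G⁺ is obtained from G by adding one edge, then at every step i of the elimination process the elimination-neighborhood degree satisfies d(i, G, P) ≤ d(i, G⁺, P). -/
open Finset

/-- Node elimination of a single vertex `v`: remove `v` (it becomes isolated) and
complete its remaining neighborhood into a clique. -/
def elimVertex {V : Type*} (G : SimpleGraph V) (v : V) : SimpleGraph V where
  Adj a b := a ≠ b ∧ a ≠ v ∧ b ≠ v ∧ (G.Adj a b ∨ (G.Adj v a ∧ G.Adj v b))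
  symm := by
    constructor
    intro a b h
    exact ⟨h.1.symm, h.2.2.1, h.2.1,
      h.2.2.2.elim (fun x => Or.inl x.symm) (fun x => Or.inr ⟨x.2, x.1⟩)⟩
  loopless := by
    constructor
    intro a h
    exact h.1 rfl

/-- `elimGraph G P i` is the elimination graph after eliminating `P 0, …, P (i-1)`. -/
def elimGraph {V : Type*} (G : SimpleGraph V) (P : ℕ → V) : ℕ → SimpleGraph V
  | 0 => G
  | (i + 1) => elimVertex (elimGraph G P i) (P i)

/-- Elimination degree of the `i`-th eliminated vertex (0-indexed). -/
noncomputable def elimDeg {V : Type*} (G : SimpleGraph V) (P : ℕ → V) (i : ℕ) : ℕ :=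
  ((elimGraph G P i).neighborSet (P i)).ncard

/-- Scalar elimination complexity `C(G, P) = Σ_i d(i, G, P)²`. -/
noncomputable def elimComplexity {V : Type*} (G : SimpleGraph V) (P : ℕ → V) (n : ℕ) : ℕ :=
  ∑ i ∈ Finset.range n, (elimDeg G P i) ^ 2


lemma elimVertex_mono {V : Type*} {G H : SimpleGraph V} (h : G ≤ H) (v : V) :
    elimVertex G v ≤ elimVertex H v := by
  intro a b hab
  exact ⟨hab.1, hab.2.1, hab.2.2.1,
    hab.2.2.2.elim (fun x => Or.inl (h x)) (fun x => Or.inr ⟨h x.1, h x.2⟩)⟩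

lemma elimGraph_mono {V : Type*} {G H : SimpleGraph V} (h : G ≤ H) (P : ℕ → V) (i : ℕ) :
    elimGraph G P i ≤ elimGraph H P i := by
  induction i with
  | zero => exact h
  | succ n ih => exact elimVertex_mono ih (P n)

/-- adding one edge cannot decrease any elimination degree,
for a fixed elimination ordering. -/
theorem stmt0 {V : Type*} [Fintype V] (G : SimpleGraph V) (P : ℕ → V)
    (u v : V) (huv : u ≠ v) (Gp : SimpleGraph V)
    (hGp : Gp = G ⊔ SimpleGraph.fromEdgeSet {s(u, v)}) (i : ℕ) :
    elimDeg G P i ≤ elimDeg Gp P i := by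
  subst hGp
  apply Set.ncard_le_ncard _ (Set.toFinite _)
  intro x hx
  exact elimGraph_mono le_sup_left P i hx
end

section
/- Suppose in a graph G the vertex set is partitioned into blocks Π_0,…,Π_{r−1}, each of size k = n/r, such that for each i, every vertex of Π_i is adjacent only to vertices in Π_{i−1} ∪ Π_i ∪ Π_{i+1}. Then under any ordering that eliminates blocks Π_0, Π_1, … in sequence, the elimination degree of every vertex is at most 3k, and hence the elimination complexity is at most 9 n k² = 9 n³ / r². -/
open Finset

/-- if the vertices are partitioned into `r` blocks of size `k = n/r`
with adjacency confined to neighboring blocks, then under any block-sequential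
elimination ordering every elimination degree is at most `3k`, hence the
elimination complexity is at most `9nk²`. -/
theorem stmt11 {V : Type*} [Fintype V] (G : SimpleGraph V) (r k n : ℕ)
    (β : V → Fin r)
    (hn : n = Fintype.card V) (hnrk : n = r * k)
    (hblock : ∀ b : Fin r, {v | β v = b}.ncard = k)
    (hadj : ∀ u v, G.Adj u v →
      (β u : ℕ) ≤ (β v : ℕ) + 1 ∧ (β v : ℕ) ≤ (β u : ℕ) + 1)
    (P : ℕ → V) (hinj : Set.InjOn P (Set.Iio n)) (hsurj : ∀ v : V, ∃ i < n, P i = v)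
    (hmono : ∀ i j, i < j → j < n → (β (P i) : ℕ) ≤ (β (P j) : ℕ)) :
    (∀ i < n, elimDeg G P i ≤ 3 * k) ∧ elimComplexity G P n ≤ 9 * n * k ^ 2 := by
  -- monotonicity extended to ≤
  have hmono' : ∀ i j, i ≤ j → j < n → (β (P i) : ℕ) ≤ (β (P j) : ℕ) := by
    intro i j hij hj
    rcases lt_or_eq_of_le hij with h | h
    · exact hmono i j h hj
    · subst h; exact le_refl _
  -- Invariant: edges stay within adjacent blocks, and eliminated vertices are isolated
  have inv : ∀ i, i ≤ n → ∀ u v, (elimGraph G P i).Adj u v →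
      ((β u : ℕ) ≤ (β v : ℕ) + 1 ∧ (β v : ℕ) ≤ (β u : ℕ) + 1) ∧
      ∀ j < i, u ≠ P j ∧ v ≠ P j := by
    intro i
    induction i with
    | zero =>
      intro _ u v h
      exact ⟨hadj u v h, fun j hj => absurd hj (Nat.not_lt_zero j)⟩
    | succ i ih =>
      intro hi u v h
      have hi' : i ≤ n := Nat.le_of_succ_le hi
      have hin : i < n := hi
      obtain ⟨hne, hu, hv, hor⟩ := h
      -- helper: a vertex not yet eliminated (through step i) has block ≥ β (P i)
      have hge : ∀ w : V, (∀ j < i, w ≠ P j) → w ≠ P i →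
          (β (P i) : ℕ) ≤ (β w : ℕ) := by
        intro w hw hwi
        obtain ⟨j, hjn, hjw⟩ := hsurj w
        have hji : i ≤ j := by
          by_contra hjlt
          push_neg at hjlt
          exact hw j hjlt hjw.symm
        have := hmono' i j hji hjn
        rwa [hjw] at this
      rcases hor with hold | ⟨h1, h2⟩
      · obtain ⟨hb, hnj⟩ := ih hi' u v hold
        refine ⟨hb, fun j hj => ?_⟩
        rcases Nat.lt_succ_iff_lt_or_eq.mp hj with hj' | hj'
        · exact hnj j hj'
        · subst hj'; exact ⟨hu, hv⟩
      · obtain ⟨hb1, hnj1⟩ := ih hi' (P i) u h1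
        obtain ⟨hb2, hnj2⟩ := ih hi' (P i) v h2
        have hgu : (β (P i) : ℕ) ≤ (β u : ℕ) :=
          hge u (fun j hj => (hnj1 j hj).2) hu
        have hgv : (β (P i) : ℕ) ≤ (β v : ℕ) :=
          hge v (fun j hj => (hnj2 j hj).2) hv
        constructor
        · exact ⟨le_trans hb1.2 (by omega), le_trans hb2.2 (by omega)⟩
        · intro j hj
          rcases Nat.lt_succ_iff_lt_or_eq.mp hj with hj' | hj'
          · exact ⟨(hnj1 j hj').2, (hnj2 j hj').2⟩
          · subst hj'; exact ⟨hu, hv⟩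
  -- Degree bound
  have hdeg : ∀ i < n, elimDeg G P i ≤ 3 * k := by
    intro i hi
    set b : ℕ := (β (P i) : ℕ) with hb
    have hsub : (elimGraph G P i).neighborSet (P i) ⊆
        {v | (β v : ℕ) = b} ∪ {v | (β v : ℕ) = b + 1} := by
      intro v hv
      have hadjv : (elimGraph G P i).Adj (P i) v := hv
      obtain ⟨⟨_, hle⟩, hnj⟩ := inv i (le_of_lt hi) (P i) v hadjv
      have hvne : v ≠ P i := fun h => (elimGraph G P i).loopless.irrefl (P i) (h ▸ hadjv)
      -- v is not yet eliminated, so its block is ≥ b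
      obtain ⟨j, hjn, hjv⟩ := hsurj v
      have hji : i ≤ j := by
        by_contra hjlt
        push_neg at hjlt
        exact (hnj j hjlt).2 hjv.symm
      have hgv : b ≤ (β v : ℕ) := by
        have := hmono' i j hji hjn
        rwa [hjv] at this
      have : (β v : ℕ) = b ∨ (β v : ℕ) = b + 1 := by omega
      rcases this with h | h
      · exact Or.inl h
      · exact Or.inr h
    have h1 : {v : V | (β v : ℕ) = b}.ncard = k := by
      have : {v : V | (β v : ℕ) = b} = {v : V | β v = β (P i)} := by
        ext v
        simp only [Set.mem_setOf_eq, Fin.ext_iff, hb]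
      rw [this]
      exact hblock (β (P i))
    have h2 : {v : V | (β v : ℕ) = b + 1}.ncard ≤ k := by
      by_cases hr : b + 1 < r
      · have : {v : V | (β v : ℕ) = b + 1} = {v : V | β v = ⟨b + 1, hr⟩} := by
          ext v
          simp only [Set.mem_setOf_eq, Fin.ext_iff]
        rw [this, hblock ⟨b + 1, hr⟩]
      · have : {v : V | (β v : ℕ) = b + 1} = ∅ := by
          ext v
          simp only [Set.mem_setOf_eq, Set.mem_empty_iff_false, iff_false]
          have := (β v).isLt
          omega
        rw [this]
        simp
    calc elimDeg G P i ≤ ({v : V | (β v : ℕ) = b} ∪ {v : V | (β v : ℕ) = b + 1}).ncard :=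
          Set.ncard_le_ncard hsub (Set.toFinite _)
      _ ≤ {v : V | (β v : ℕ) = b}.ncard + {v : V | (β v : ℕ) = b + 1}.ncard :=
          Set.ncard_union_le _ _
      _ ≤ k + k := by rw [h1]; omega
      _ ≤ 3 * k := by omega
  refine ⟨hdeg, ?_⟩
  calc elimComplexity G P n ≤ ∑ i ∈ Finset.range n, (3 * k) ^ 2 := by
        apply Finset.sum_le_sum
        intro i hi
        exact Nat.pow_le_pow_left (hdeg i (Finset.mem_range.mp hi)) 2
    _ = n * (3 * k) ^ 2 := by rw [Finset.sum_const, Finset.card_range, smul_eq_mul]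
    _ = 9 * n * k ^ 2 := by ring
end
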